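/- Let G be a residually finite group and a ∈ G an element such that the cyclic subgroup ⟨a⟩ has finite index in the centralizer C_G(a) and such that C_G(a) is dense in C_Ĝ(a) (i.e. the closure of C_G(a) in the profinite completion Ĝ equals C_Ĝ(a)). Then C_Ĝ(a) = cl(⟨a⟩)·C_G(a), where cl(⟨a⟩) is the closure of ⟨a⟩ in Ĝ. Consequently, for any subgroup A of G containing a, one has C_Ĝ(a)·G = (Ā ∩ C_Ĝ(a))·G as subsets of Ĝ. -/

import Mathlib

open Pointwise

universe u

variable (G : Type u) [Group G]

/-- The (finite-index normal subgroup) index set for the product of all finite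
quotients of `G`. -/
abbrev FinIndexNormal := {N : Subgroup G // N.Normal ∧ N.FiniteIndex}

instance (N : FinIndexNormal G) : N.1.Normal := N.2.1

/-- The product of all finite quotients of `G`, each taken with the discrete
topology, with the product topology. -/
abbrev FinQuotProd := ∀ N : FinIndexNormal G, G ⧸ N.1

instance (N : FinIndexNormal G) : TopologicalSpace (G ⧸ N.1) := ⊥
instance (N : FinIndexNormal G) : DiscreteTopology (G ⧸ N.1) := ⟨rfl⟩
instance (N : FinIndexNormal G) : IsTopologicalGroup (G ⧸ N.1) where
  continuous_mul := continuous_of_discreteTopology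
  continuous_inv := continuous_of_discreteTopology

/-- The natural homomorphism from `G` to the product of all of its finite
quotients. -/
def toFinQuot : G →* FinQuotProd G := Pi.monoidHom fun N => QuotientGroup.mk' N.1

/-- The profinite completion `Ĝ` of `G`, realized as the closure of the image of
the natural homomorphism `G → ∏ G/N` over all finite-index normal subgroups `N`. -/
def profComp : Subgroup (FinQuotProd G) := (toFinQuot G).range.topologicalClosure

/-- The profinite completion of `G` as a topological group. -/
abbrev ProfComp := ↥(profComp G)

/-- The natural map `ι : G → Ĝ` (it has dense image). -/
def iota : G →* ProfComp G :=
  (toFinQuot G).codRestrict (profComp G) fun g =>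
    Subgroup.le_topologicalClosure _ ⟨g, rfl⟩

/-- The closure `H̄` in the profinite completion `Ĝ` of (the image of) a
subgroup `H ≤ G`. -/
def clSub (H : Subgroup G) : Subgroup (ProfComp G) :=
  (H.map (iota G)).topologicalClosure

/-- `G` is residually finite if the natural map `G → Ĝ` is injective. -/
def ResiduallyFinite : Prop := Function.Injective (iota G)

/-- A residually finite group `G` is *adjustable* if for every pair of finitely
generated subgroups `A, B ≤ G` and every `γ ∈ Ĝ` with `γ⁻¹ Ā γ = B̄`, there is
`β ∈ B̄` and a nontrivial `a ∈ A` with `(γβ)⁻¹ a (γβ) ∈ B`. -/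
def Adjustable : Prop :=
  ResiduallyFinite G ∧
    ∀ (A B : Subgroup G), A.FG → B.FG → ∀ γ : ProfComp G,
      (clSub G A).map (MulAut.conj γ⁻¹).toMonoidHom = clSub G B →
      ∃ β ∈ clSub G B, ∃ a ∈ A, a ≠ (1 : G) ∧
        (γ * β)⁻¹ * iota G a * (γ * β) ∈ B.map (iota G)

/-- A subgroup `H ≤ G` is separable if every `g ∉ H` is separated from `H` in
some finite quotient of `G`. -/
def SeparableSubgroup (H : Subgroup G) : Prop :=
  ∀ g : G, g ∉ H →
    ∃ (Q : Type u) (_ : Group Q) (_ : Finite Q) (φ : G →* Q),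
      Function.Surjective φ ∧ φ g ∉ H.map φ

/-- `G` is subgroup separable (LERF) if every finitely generated subgroup is
separable. -/
def SubgroupSeparable : Prop :=
  ∀ H : Subgroup G, H.FG → SeparableSubgroup G H

/-- `G` is conjugacy separable if non-conjugate elements remain non-conjugate in
some finite quotient. -/
def ConjugacySeparable : Prop :=
  ∀ a b : G, ¬ IsConj a b →
    ∃ (Q : Type u) (_ : Group Q) (_ : Finite Q) (φ : G →* Q),
      Function.Surjective φ ∧ ¬ IsConj (φ a) (φ b)

/-- `G` is subgroup conjugacy separable if any two finitely generated subgroups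
that are not conjugate in `G` have non-conjugate images in some finite quotient
of `G`. -/
def SubgroupConjugacySeparable : Prop :=
  ∀ H K : Subgroup G, H.FG → K.FG →
    (¬ ∃ g : G, H.map (MulAut.conj g).toMonoidHom = K) →
    ∃ (Q : Type u) (_ : Group Q) (_ : Finite Q) (φ : G →* Q),
      Function.Surjective φ ∧
        ¬ ∃ q : Q, (H.map φ).map (MulAut.conj q).toMonoidHom = K.map φ

/-- If `G` is residually finite, `⟨a⟩` has finite index in `C_G(a)`
and `C_G(a)` is dense in `C_Ĝ(a)`, then `C_Ĝ(a) = cl(⟨a⟩)·C_G(a)`, and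
consequently for every subgroup `A` containing `a` one has
`C_Ĝ(a)·G = (Ā ∩ C_Ĝ(a))·G` in `Ĝ`. -/
theorem statement_3 (G : Type u) [Group G] (hRF : ResiduallyFinite G) (a : G)
    (hfin : ((Subgroup.zpowers a).subgroupOf (Subgroup.centralizer {a})).FiniteIndex)
    (hdense : ((Subgroup.centralizer {a}).map (iota G)).topologicalClosure =
      Subgroup.centralizer {iota G a}) :
    (Subgroup.centralizer {iota G a} : Set (ProfComp G)) =
        (clSub G (Subgroup.zpowers a) : Set (ProfComp G)) *
          (⇑(iota G) '' (Subgroup.centralizer {a} : Set G)) ∧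
      ∀ A : Subgroup G, a ∈ A →
        (Subgroup.centralizer {iota G a} : Set (ProfComp G)) * Set.range ⇑(iota G) =
          ((clSub G A ⊓ Subgroup.centralizer {iota G a} : Subgroup (ProfComp G)) :
              Set (ProfComp G)) * Set.range ⇑(iota G) := by
  classical
  set C := Subgroup.centralizer ({a} : Set G) with hCdef
  set Z := Subgroup.zpowers a with hZdef
  have hZC : Z ≤ C := by
    intro z hz
    rw [hCdef, Subgroup.mem_centralizer_iff]
    rintro h hh
    rw [Set.mem_singleton_iff] at hh
    rw [hh]
    obtain ⟨n, rfl⟩ := Subgroup.mem_zpowers_iff.mp hz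
    exact ((Commute.refl a).zpow_right n).eq
  have hcomm : ∀ z ∈ Z, ∀ c ∈ C, c * z = z * c := by
    intro z hz c hc
    obtain ⟨n, rfl⟩ := Subgroup.mem_zpowers_iff.mp hz
    have hac : Commute a c := Subgroup.mem_centralizer_iff.mp hc a rfl
    exact ((hac.symm).zpow_right n).eq
  -- the centralizer of `iota G a` is closed
  have hCCset : (Subgroup.centralizer {iota G a} : Set (ProfComp G)) =
      {x | iota G a * x = x * iota G a} := by
    ext x; simp [Subgroup.mem_centralizer_iff]
  have hCCclosed : IsClosed (Subgroup.centralizer {iota G a} : Set (ProfComp G)) := by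
    rw [hCCset]
    exact isClosed_eq (continuous_const.mul continuous_id) (continuous_id.mul continuous_const)
  have hCmem : ∀ c ∈ C, iota G c ∈ Subgroup.centralizer {iota G a} := by
    intro c hc
    rw [Subgroup.mem_centralizer_iff]
    rintro h hh
    rw [Set.mem_singleton_iff] at hh
    rw [hh, ← map_mul, ← map_mul, Subgroup.mem_centralizer_iff.mp hc a rfl]
  have hclZle : clSub G Z ≤ Subgroup.centralizer {iota G a} := by
    apply Subgroup.topologicalClosure_minimal _ _ hCCclosed
    rw [Subgroup.map_le_iff_le_comap]
    intro z hz
    exact hCmem z (hZC hz)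
  -- coe facts
  have hclZcoe : (clSub G Z : Set (ProfComp G)) = closure (⇑(iota G) '' (Z : Set G)) := by
    rw [clSub, Subgroup.topologicalClosure_coe, Subgroup.coe_map]
  -- main equality
  haveI := hfin
  haveI : Finite (↥C ⧸ Z.subgroupOf C) := Subgroup.finite_quotient_of_finiteIndex
  have main : (Subgroup.centralizer {iota G a} : Set (ProfComp G)) =
      (clSub G Z : Set (ProfComp G)) * (⇑(iota G) '' (C : Set G)) := by
    apply Set.Subset.antisymm
    · -- ⊆ : use finite coset decomposition
      set S : Set (ProfComp G) := ⋃ q : ↥C ⧸ Z.subgroupOf C,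
        closure (⇑(iota G) '' (Z : Set G)) * {iota G ((Quotient.out q : ↥C) : G)} with hS
      have hSclosed : IsClosed S := by
        apply isClosed_iUnion_of_finite
        intro q
        rw [Set.mul_singleton]
        exact (Homeomorph.mulRight (iota G ((Quotient.out q : ↥C) : G))).isClosedMap _
          isClosed_closure
      have hsub : ⇑(iota G) '' (C : Set G) ⊆ S := by
        rintro _ ⟨c, hc, rfl⟩
        set c' : ↥C := ⟨c, hc⟩ with hc'
        set q : ↥C ⧸ Z.subgroupOf C := QuotientGroup.mk c' with hq
        set r : ↥C := Quotient.out q with hr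
        have hrq : (QuotientGroup.mk r : ↥C ⧸ Z.subgroupOf C) = QuotientGroup.mk c' :=
          QuotientGroup.out_eq' q
        have hz' : r⁻¹ * c' ∈ Z.subgroupOf C := QuotientGroup.eq.mp hrq
        have hzZ : ((r : G)⁻¹ * c) ∈ Z := Subgroup.mem_subgroupOf.mp hz'
        have hcd : c = ((r : G)⁻¹ * c) * (r : G) := by
          rw [← hcomm _ hzZ _ r.2]
          group
        apply Set.mem_iUnion.mpr
        refine ⟨q, ?_⟩
        rw [Set.mul_singleton]
        refine ⟨iota G ((r : G)⁻¹ * c), subset_closure ⟨_, hzZ, rfl⟩, ?_⟩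
        show iota G ((r : G)⁻¹ * c) * iota G (r : G) = iota G c
        rw [← map_mul, ← hcd]
      have hSsub : S ⊆ (clSub G Z : Set (ProfComp G)) * (⇑(iota G) '' (C : Set G)) := by
        apply Set.iUnion_subset
        intro q
        apply Set.mul_subset_mul
        · rw [hclZcoe]
        · rintro _ rfl
          exact ⟨_, (Quotient.out q : ↥C).2, rfl⟩
      have : (Subgroup.centralizer {iota G a} : Set (ProfComp G)) =
          closure (⇑(iota G) '' (C : Set G)) := by
        rw [← hdense, Subgroup.topologicalClosure_coe, Subgroup.coe_map]
      rw [this]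
      exact (closure_minimal hsub hSclosed).trans hSsub
    · rintro x hx
      rw [Set.mem_mul] at hx
      obtain ⟨y, hy, w, ⟨c, hc, rfl⟩, rfl⟩ := hx
      exact mul_mem (hclZle hy) (hCmem c hc)
  refine ⟨main, ?_⟩
  intro A hA
  have hZA : Z ≤ A := Subgroup.zpowers_le.mpr hA
  have hclZA : clSub G Z ≤ clSub G A :=
    Subgroup.topologicalClosure_minimal _
      ((Subgroup.map_mono hZA).trans (Subgroup.le_topologicalClosure _))
      (Subgroup.isClosed_topologicalClosure _)
  apply Set.Subset.antisymm
  · rintro x hx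
    rw [Set.mem_mul] at hx
    obtain ⟨y, hy, w, ⟨g, rfl⟩, rfl⟩ := hx
    have hy2 : y ∈ (clSub G Z : Set (ProfComp G)) * (⇑(iota G) '' (C : Set G)) := by
      rw [← main]; exact hy
    rw [Set.mem_mul] at hy2
    obtain ⟨z, hz, w', ⟨c, hc, rfl⟩, rfl⟩ := hy2
    refine ⟨z, ⟨hclZA hz, hclZle hz⟩, iota G (c * g), ⟨c * g, rfl⟩, ?_⟩
    rw [map_mul, mul_assoc]
  · apply Set.mul_subset_mul _ subset_rfl
    intro x hx
    exact hx.2
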